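/- arXiv:math/9907132 — 2 statements merged into one kernel-verified Lean document; each statement's English description precedes it below -/
import Mathlib

section
/- Let f : [0,1] → ℝ be continuous with f(0)=f(1)=0, f > 0 on (0,1), and suppose inf_{s∈[ε,1-ε]} f(s) ≥ cε for some constant c > 0 and all ε ∈ (0,1/2). Let T : ℝ → [0,1] be continuously differentiable with T(x) → 1 as x → -∞ and T(x) → 0 as x → +∞. Then (∫_ℝ f(T(x)) dx) · (∫_ℝ T'(x)² dx) ≥ C, where C > 0 depends only on c. -/
open Set MeasureTheory Filter

/-- For a front-like profile, the product of the reaction integral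
and the Dirichlet integral is bounded below by a constant depending only on c. -/
theorem reaction_dirichlet_lower_bound (c : ℝ) (hc : 0 < c) :
    ∃ C > 0, ∀ f : ℝ → ℝ, ContinuousOn f (Icc 0 1) → f 0 = 0 → f 1 = 0 →
      (∀ x ∈ Ioo (0:ℝ) 1, 0 < f x) →
      (∀ ε ∈ Ioo (0:ℝ) (1/2), ∀ s ∈ Icc ε (1 - ε), c * ε ≤ f s) →
      ∀ T T' : ℝ → ℝ, (∀ x, HasDerivAt T (T' x) x) → Continuous T' →
        (∀ x, T x ∈ Icc (0:ℝ) 1) →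
        Tendsto T atBot (nhds 1) → Tendsto T atTop (nhds 0) →
        Integrable (fun x => f (T x)) →
        Integrable (fun x => (T' x) ^ 2) →
        C ≤ (∫ x, f (T x)) * (∫ x, (T' x) ^ 2) := by
  refine ⟨c / 16, by positivity, ?_⟩
  intro f hfc hf0 hf1 hfpos hfε T T' hT hT'c hTmem hbot htop hfint hDint
  have hTc : Continuous T := by
    rw [continuous_iff_continuousAt]; exact fun x => (hT x).continuousAt
  -- find a₀ with T a₀ > 3/4
  obtain ⟨a₀, ha₀⟩ : ∃ a₀, (3/4 : ℝ) < T a₀ :=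
    (hbot.eventually (eventually_gt_nhds (by norm_num))).exists
  -- find b₀ ≥ a₀ with T b₀ < 1/4
  obtain ⟨b₀, hb₀a, hb₀⟩ : ∃ b₀, a₀ ≤ b₀ ∧ T b₀ < (1/4 : ℝ) := by
    have h1 : ∀ᶠ x in atTop, T x < (1/4 : ℝ) := htop.eventually (eventually_lt_nhds (by norm_num))
    have h2 : ∀ᶠ x in atTop, a₀ ≤ x := eventually_ge_atTop a₀
    exact ((h2.and h1).exists).imp (fun x hx => ⟨hx.1, hx.2⟩)
  -- last crossing of 3/4
  set A : Set ℝ := Icc a₀ b₀ ∩ {x | 3/4 ≤ T x} with hA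
  have hAcomp : IsCompact A := isCompact_Icc.inter_right (isClosed_le continuous_const hTc)
  have hAne : A.Nonempty := ⟨a₀, ⟨le_refl _, hb₀a⟩, ha₀.le⟩
  set a := sSup A with ha_def
  have haA : a ∈ A := hAcomp.sSup_mem hAne
  -- first crossing of 1/4 after a
  set B : Set ℝ := Icc a b₀ ∩ {x | T x ≤ 1/4} with hB
  have hBcomp : IsCompact B := isCompact_Icc.inter_right (isClosed_le hTc continuous_const)
  have hBne : B.Nonempty := ⟨b₀, ⟨haA.1.2, le_refl _⟩, hb₀.le⟩
  set b := sInf B with hb_def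
  have hbB : b ∈ B := hBcomp.sInf_mem hBne
  have hab : a < b := by
    rcases lt_or_eq_of_le hbB.1.1 with h | h
    · exact h
    · exfalso; have h1 := haA.2; have h2 := hbB.2; rw [← h] at h2
      simp only [mem_setOf_eq] at h1 h2; linarith
  obtain ⟨L, hL_def⟩ : ∃ L : ℝ, L = b - a := ⟨b - a, rfl⟩
  have hL : 0 < L := hL_def ▸ sub_pos.mpr hab
  -- on (a,b), T ∈ [1/4, 3/4]
  have hmid : ∀ x ∈ Ioo a b, T x ∈ Icc (1/4 : ℝ) (3/4) := by
    intro x hx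
    have hxb₀ : x ≤ b₀ := le_trans hx.2.le hbB.1.2
    constructor
    · by_contra h
      push_neg at h
      have hxB : x ∈ B := ⟨⟨hx.1.le, hxb₀⟩, h.le⟩
      exact absurd (csInf_le hBcomp.bddBelow hxB) (not_le.mpr hx.2)
    · by_contra h
      push_neg at h
      have hxA : x ∈ A := ⟨⟨le_trans haA.1.1 hx.1.le, hxb₀⟩, h.le⟩
      exact absurd (le_csSup hAcomp.bddAbove hxA) (not_le.mpr hx.1)
  -- f ∘ T is nonnegative
  have hfnn : ∀ x, 0 ≤ f (T x) := by
    intro x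
    have hx := hTmem x
    rcases eq_or_lt_of_le hx.1 with h0 | h0
    · rw [← h0, hf0]
    rcases eq_or_lt_of_le hx.2 with h1 | h1
    · rw [h1, hf1]
    · exact (hfpos _ ⟨h0, h1⟩).le
  -- Reaction integral lower bound
  have hIlow : c * (1/4) * L ≤ ∫ x, f (T x) := by
    have h1 : c * (1/4) * (volume (Ioo a b)).toReal ≤ ∫ x in Ioo a b, f (T x) := by
      refine setIntegral_ge_of_const_le_real measurableSet_Ioo (by simp) ?_ hfint.integrableOn
      intro x hx
      exact hfε (1/4) (by norm_num) (T x) ⟨(hmid x hx).1, by have := (hmid x hx).2; linarith⟩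
    have h2 : (volume (Ioo a b)).toReal = L := by
      rw [Real.volume_Ioo, ENNReal.toReal_ofReal (by linarith : (0:ℝ) ≤ b - a), hL_def]
    rw [h2] at h1
    exact h1.trans (setIntegral_le_integral hfint (Filter.Eventually.of_forall hfnn))
  -- FTC
  have hftc : ∫ x in a..b, T' x = T b - T a :=
    intervalIntegral.integral_eq_sub_of_hasDerivAt (fun x _ => hT x) (hT'c.intervalIntegrable a b)
  have hTa : (3/4 : ℝ) ≤ T a := haA.2
  have hTb : T b ≤ (1/4 : ℝ) := hbB.2
  -- 1/2 ≤ ∫_a^b |T'|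
  have habs : (1/2 : ℝ) ≤ ∫ x in a..b, |T' x| := by
    have h1 : (1/2 : ℝ) ≤ |∫ x in a..b, T' x| := by
      rw [hftc, abs_sub_comm]
      calc (1/2 : ℝ) ≤ T a - T b := by linarith
        _ ≤ |T a - T b| := le_abs_self _
    exact h1.trans (intervalIntegral.abs_integral_le_integral_abs hab.le)
  -- AM-GM pointwise: |u| ≤ L * u^2 + 1/(4L)
  have hamgm : ∀ u : ℝ, |u| ≤ L * u ^ 2 + 1 / (4 * L) := by
    intro u
    have e : (2 * L * |u| - 1) ^ 2 = 4 * L ^ 2 * u ^ 2 - 4 * L * |u| + 1 := by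
      rw [show u ^ 2 = |u| ^ 2 from (sq_abs u).symm]; ring
    have h' : 0 ≤ 4 * L ^ 2 * u ^ 2 - 4 * L * |u| + 1 := e ▸ sq_nonneg _
    have hstep : (|u| - L * u ^ 2) * (4 * L) ≤ 1 := by nlinarith [h']
    have := (le_div_iff₀ (by positivity : (0:ℝ) < 4 * L)).mpr hstep
    linarith
  -- Dirichlet lower bound on [a,b]
  have hDnn : 0 ≤ ∫ x in a..b, (T' x) ^ 2 :=
    intervalIntegral.integral_nonneg hab.le (fun x _ => sq_nonneg _)
  have hDab : (1/4 : ℝ) ≤ L * (∫ x in a..b, (T' x) ^ 2) := by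
    have hint1 : IntervalIntegrable (fun x => |T' x|) volume a b :=
      (hT'c.abs).intervalIntegrable a b
    have hint2 : IntervalIntegrable (fun x => L * (T' x) ^ 2 + 1 / (4 * L)) volume a b :=
      ((continuous_const.mul (hT'c.pow 2)).add continuous_const).intervalIntegrable a b
    have hmono : ∫ x in a..b, |T' x| ≤ ∫ x in a..b, (L * (T' x) ^ 2 + 1 / (4 * L)) :=
      intervalIntegral.integral_mono_on hab.le hint1 hint2 (fun x _ => hamgm (T' x))
    have heval : ∫ x in a..b, (L * (T' x) ^ 2 + 1 / (4 * L))
        = L * (∫ x in a..b, (T' x) ^ 2) + (b - a) * (1 / (4 * L)) := by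
      rw [intervalIntegral.integral_add (f := fun x => L * (T' x) ^ 2) (g := fun _ => 1 / (4 * L))
          ((continuous_const.mul (hT'c.pow 2)).intervalIntegrable a b)
        (intervalIntegrable_const), intervalIntegral.integral_const_mul,
        intervalIntegral.integral_const, smul_eq_mul]
    have hconst : (b - a) * (1 / (4 * L)) = 1/4 := by
      rw [← hL_def]; field_simp
    have key : (1/2 : ℝ) ≤ L * (∫ x in a..b, (T' x) ^ 2) + 1/4 := by
      have := habs.trans hmono
      rw [heval, hconst] at this
      linarith
    linarith
  -- extend Dirichlet to ℝ
  have hDfull : ∫ x in a..b, (T' x) ^ 2 ≤ ∫ x, (T' x) ^ 2 := by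
    rw [intervalIntegral.integral_of_le hab.le]
    exact setIntegral_le_integral hDint (Filter.Eventually.of_forall (fun x => sq_nonneg _))
  -- conclude
  have hInn : 0 ≤ ∫ x, f (T x) := integral_nonneg hfnn
  calc c / 16 = (c * (1/4)) * (1/4) := by ring
    _ ≤ (c * (1/4)) * (L * ∫ x in a..b, (T' x) ^ 2) :=
        mul_le_mul_of_nonneg_left hDab (by positivity)
    _ = (c * (1/4) * L) * ∫ x in a..b, (T' x) ^ 2 := by ring
    _ ≤ (∫ x, f (T x)) * ∫ x in a..b, (T' x) ^ 2 :=
        mul_le_mul_of_nonneg_right hIlow hDnn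
    _ ≤ (∫ x, f (T x)) * ∫ x, (T' x) ^ 2 :=
        mul_le_mul_of_nonneg_left hDfull hInn
end

section
/- Let f : [0,1] → ℝ be continuous with f(0)=f(1)=0, f>0 on (0,1) and inf_{s∈[ε,1-ε]} f(s) ≥ cε for all ε ∈ (0,1/2). Then there exists C > 0 depending only on c such that for every continuously differentiable T : [0,H] → [0,1], (∫₀^H |T'(y)|² dy) · (∫₀^H f(T(y)) dy) ≥ C · (sup_{y₁,y₂ ∈ [0,H]} |T(y₁) - T(y₂)|)³. -/
open Set intervalIntegral

lemma osc_alg {S D R : ℝ} (hS : 0 ≤ S) (hD : 0 ≤ D) (hR : 0 ≤ R)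
    (h : ∀ l : ℝ, 0 < l → 2 * l * S ≤ D + l ^ 2 * R) : S ^ 2 ≤ D * R := by
  rcases eq_or_lt_of_le hS with hS0 | hS0
  · nlinarith
  rcases eq_or_lt_of_le hR with hR0 | hR0
  · have := h (D / S + 1) (by positivity)
    have hSne : S ≠ 0 := ne_of_gt hS0
    rw [← hR0] at this
    field_simp at this
    nlinarith
  · have := h (S / R) (by positivity)
    have hRne : R ≠ 0 := ne_of_gt hR0
    have e1 : (S / R) ^ 2 * R = S ^ 2 / R := by field_simp
    have e2 : 2 * (S / R) * S = 2 * (S ^ 2 / R) := by field_simp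
    rw [e1, e2] at this
    have h3 : S ^ 2 / R ≤ D := by linarith
    calc S ^ 2 = S ^ 2 / R * R := by field_simp
      _ ≤ D * R := mul_le_mul_of_nonneg_right h3 hR

lemma osc_aux (c : ℝ) (hc : 0 < c) (f : ℝ → ℝ) (hf : ContinuousOn f (Icc 0 1))
    (hf0 : f 0 = 0) (hf1 : f 1 = 0) (hfpos : ∀ x ∈ Ioo (0:ℝ) 1, 0 < f x)
    (hflow : ∀ ε ∈ Ioo (0:ℝ) (1/2), ∀ s ∈ Icc ε (1 - ε), c * ε ≤ f s)
    (H : ℝ) (hH : 0 < H) (T T' : ℝ → ℝ)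
    (hT : ∀ y, HasDerivAt T (T' y) y) (hT' : Continuous T')
    (hTmem : ∀ y, T y ∈ Icc (0:ℝ) 1)
    (y₁ : ℝ) (hy₁ : y₁ ∈ Icc 0 H) (y₂ : ℝ) (hy₂ : y₂ ∈ Icc 0 H)
    (hab : T y₁ ≤ T y₂) :
    c/27 * |T y₁ - T y₂| ^ 3
      ≤ (∫ y in (0:ℝ)..H, (T' y) ^ 2) * (∫ y in (0:ℝ)..H, f (T y)) := by
  have hTc : Continuous T := by
    rw [continuous_iff_continuousAt]; exact fun y => (hT y).continuousAt
  set a := T y₁ with ha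
  set b := T y₂ with hb
  set M := b - a with hMdef
  have habs : |T y₁ - T y₂| = M := by
    rw [abs_sub_comm]; exact abs_of_nonneg (by linarith)
  have hfnn : ∀ s ∈ Icc (0:ℝ) 1, 0 ≤ f s := by
    intro s hs
    rcases eq_or_lt_of_le hs.1 with h0 | h0
    · rw [← h0, hf0]
    rcases eq_or_lt_of_le hs.2 with h1 | h1
    · rw [h1, hf1]
    · exact (hfpos s ⟨h0, h1⟩).le
  have hD : (0:ℝ) ≤ ∫ y in (0:ℝ)..H, (T' y) ^ 2 :=
    intervalIntegral.integral_nonneg hH.le (fun y _ => sq_nonneg _)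
  have hR : (0:ℝ) ≤ ∫ y in (0:ℝ)..H, f (T y) :=
    intervalIntegral.integral_nonneg hH.le (fun y _ => hfnn _ (hTmem y))
  have hM0 : 0 ≤ M := by linarith
  rcases eq_or_lt_of_le hM0 with hM | hM
  · rw [habs, ← hM]
    simpa using mul_nonneg hD hR
  have hM1 : M ≤ 1 := by
    have h1 := (hTmem y₁).1; have h2 := (hTmem y₂).2
    rw [← ha] at h1; rw [← hb] at h2; linarith
  have ha0 : 0 ≤ a := (hTmem y₁).1
  have hb1 : b ≤ 1 := (hTmem y₂).2
  set ε := M/3 with hεdef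
  have hεmem : ε ∈ Ioo (0:ℝ) (1/2) := ⟨by positivity, by rw [hεdef]; linarith⟩
  -- extended f and sqrt
  set fe : ℝ → ℝ := fun s => f (max 0 (min 1 s)) with hfe
  have hclamp : ∀ s : ℝ, max 0 (min 1 s) ∈ Icc (0:ℝ) 1 :=
    fun s => ⟨le_max_left _ _, max_le zero_le_one (min_le_left _ _)⟩
  have hfec : Continuous fe :=
    hf.comp_continuous (continuous_const.max (continuous_const.min continuous_id)) hclamp
  have hfenn : ∀ s, 0 ≤ fe s := fun s => hfnn _ (hclamp s)
  have hfeeq : ∀ s ∈ Icc (0:ℝ) 1, fe s = f s := by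
    intro s hs
    simp only [hfe]
    rw [min_eq_right hs.2, max_eq_right hs.1]
  set g : ℝ → ℝ := fun s => Real.sqrt (fe s) with hg
  have hgc : Continuous g := Real.continuous_sqrt.comp hfec
  have hgnn : ∀ s, 0 ≤ g s := fun s => Real.sqrt_nonneg _
  have hgsq : ∀ s, g s ^ 2 = fe s := fun s => Real.sq_sqrt (hfenn s)
  set G : ℝ → ℝ := fun x => ∫ t in (0:ℝ)..x, g t with hG
  have hGd : ∀ x, HasDerivAt G (g x) x := fun x =>
    intervalIntegral.integral_hasDerivAt_right (hgc.intervalIntegrable _ _)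
      (hgc.stronglyMeasurableAtFilter _ _) hgc.continuousAt
  have key1 : ∫ y in y₁..y₂, g (T y) * T' y = G b - G a := by
    apply intervalIntegral.integral_eq_sub_of_hasDerivAt (f := fun y => G (T y))
    · intro y _
      exact (hGd (T y)).comp y (hT y)
    · exact ((hgc.comp hTc).mul hT').intervalIntegrable _ _
  set S := ε * Real.sqrt (c * ε) with hSdef
  have hSnn : 0 ≤ S := by positivity
  have key2 : S ≤ G b - G a := by
    have hGb : G b - G a = ∫ s in a..b, g s := by
      simp only [hG]
      rw [intervalIntegral.integral_interval_sub_left (hgc.intervalIntegrable _ _)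
        (hgc.intervalIntegrable _ _)]
    have hstep1 : (∫ s in (a+ε)..(b-ε), g s) ≤ ∫ s in a..b, g s := by
      apply intervalIntegral.integral_mono_interval (by rw [hεdef]; linarith)
        (by rw [hεdef]; linarith) (by rw [hεdef]; linarith)
        (Filter.Eventually.of_forall hgnn) (hgc.intervalIntegrable _ _)
    have hstep2 : (b - ε - (a + ε)) * Real.sqrt (c * ε) ≤ ∫ s in (a+ε)..(b-ε), g s := by
      have hconst : ∫ s in (a+ε)..(b-ε), Real.sqrt (c*ε) = (b - ε - (a+ε)) * Real.sqrt (c*ε) := by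
        simp [smul_eq_mul]
      rw [← hconst]
      apply intervalIntegral.integral_mono_on (by rw [hεdef]; linarith)
        intervalIntegrable_const (hgc.intervalIntegrable _ _)
      intro s hs
      have hs1 : ε ≤ s := by linarith [hs.1]
      have hs2 : s ≤ 1 - ε := by linarith [hs.2]
      have hs01 : s ∈ Icc (0:ℝ) 1 := ⟨by linarith [hεmem.1], by linarith [hεmem.1]⟩
      have hlb : c * ε ≤ f s := hflow ε hεmem s ⟨hs1, hs2⟩
      calc Real.sqrt (c * ε) ≤ Real.sqrt (f s) := Real.sqrt_le_sqrt hlb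
        _ = g s := by rw [hg]; simp only; rw [hfeeq s hs01]
    have hlen : b - ε - (a + ε) = ε := by rw [hεdef, hMdef]; ring
    rw [hGb, hSdef]
    have hfin2 := hstep2.trans hstep1
    rw [hlen] at hfin2
    exact hfin2
  set u := min y₁ y₂ with hu
  set v := max y₁ y₂ with hv
  have hu0 : 0 ≤ u := le_min hy₁.1 hy₂.1
  have hvH : v ≤ H := max_le hy₁.2 hy₂.2
  have huv : u ≤ v := min_le_max
  have hRe : (∫ y in (0:ℝ)..H, f (T y)) = ∫ y in (0:ℝ)..H, fe (T y) :=
    intervalIntegral.integral_congr (fun y _ => (hfeeq _ (hTmem y)).symm)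
  have key3 : ∀ l : ℝ, 0 < l → 2 * l * S ≤
      (∫ y in (0:ℝ)..H, (T' y) ^ 2) + l ^ 2 * ∫ y in (0:ℝ)..H, f (T y) := by
    intro l hl
    have cgt : Continuous fun y => g (T y) * T' y := (hgc.comp hTc).mul hT'
    have p1 : G b - G a ≤ ∫ y in u..v, |g (T y) * T' y| := by
      calc G b - G a = ∫ y in y₁..y₂, g (T y) * T' y := key1.symm
        _ ≤ |∫ y in y₁..y₂, g (T y) * T' y| := le_abs_self _
        _ = |∫ y in u..v, g (T y) * T' y| := by
            rcases le_total y₁ y₂ with h | h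
            · rw [hu, hv, min_eq_left h, max_eq_right h]
            · rw [hu, hv, min_eq_right h, max_eq_left h,
                intervalIntegral.integral_symm, abs_neg]
        _ ≤ ∫ y in u..v, |g (T y) * T' y| :=
            intervalIntegral.abs_integral_le_integral_abs huv
    have p2 : (∫ y in u..v, 2 * l * |g (T y) * T' y|) ≤
        ∫ y in u..v, ((T' y) ^ 2 + l ^ 2 * fe (T y)) := by
      apply intervalIntegral.integral_mono_on huv
        ((continuous_const.mul cgt.abs).intervalIntegrable _ _)
        (((hT'.pow 2).add (continuous_const.mul (hfec.comp hTc))).intervalIntegrable _ _)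
      intro y _
      have h1 := hgnn (T y)
      have h2 := hgsq (T y)
      have h3 : |g (T y) * T' y| = g (T y) * |T' y| := by
        rw [abs_mul, abs_of_nonneg h1]
      show 2 * l * |g (T y) * T' y| ≤ (T' y) ^ 2 + l ^ 2 * (fe ∘ T) y
      rw [h3]
      have h4 : l ^ 2 * g (T y) ^ 2 = l ^ 2 * fe (T y) := by rw [h2]
      simp only [Function.comp_apply]
      nlinarith [sq_nonneg (|T' y| - l * g (T y)), sq_abs (T' y), h4]
    have p3 : (∫ y in u..v, ((T' y) ^ 2 + l ^ 2 * fe (T y))) ≤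
        (∫ y in (0:ℝ)..H, (T' y) ^ 2) + l ^ 2 * ∫ y in (0:ℝ)..H, fe (T y) := by
      rw [intervalIntegral.integral_add (f := fun y => (T' y) ^ 2)
        (g := fun y => l ^ 2 * fe (T y)) ((hT'.pow 2).intervalIntegrable _ _)
        ((continuous_const.mul (hfec.comp hTc)).intervalIntegrable _ _),
        intervalIntegral.integral_const_mul (r := l ^ 2) (f := fun y => fe (T y))]
      gcongr
      · exact intervalIntegral.integral_mono_interval hu0 huv hvH
          (Filter.Eventually.of_forall fun y => sq_nonneg _)
          ((hT'.pow 2).intervalIntegrable _ _)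
      · exact intervalIntegral.integral_mono_interval hu0 huv hvH
          (Filter.Eventually.of_forall fun y => hfenn _)
          ((hfec.comp hTc).intervalIntegrable _ _)
    have p1' : 2 * l * (G b - G a) ≤ ∫ y in u..v, 2 * l * |g (T y) * T' y| := by
      have e : (∫ y in u..v, 2 * l * |g (T y) * T' y|)
          = 2 * l * ∫ y in u..v, |g (T y) * T' y| :=
        intervalIntegral.integral_const_mul (r := 2 * l) (f := fun y => |g (T y) * T' y|)
      rw [e]
      exact mul_le_mul_of_nonneg_left p1 (by positivity)
    have hkey2' : 2 * l * S ≤ 2 * l * (G b - G a) :=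
      mul_le_mul_of_nonneg_left key2 (by positivity)
    rw [hRe]
    linarith
  have hfin := osc_alg hSnn hD hR key3
  have hSsq : S ^ 2 = c / 27 * M ^ 3 := by
    rw [hSdef, mul_pow, Real.sq_sqrt (by positivity : (0:ℝ) ≤ c * ε), hεdef]
    ring
  rw [habs, ← hSsq]
  exact hfin

theorem oscillation_cubed (c : ℝ) (hc : 0 < c) :
    ∃ C > 0, ∀ f : ℝ → ℝ, ContinuousOn f (Icc 0 1) → f 0 = 0 → f 1 = 0 →
      (∀ x ∈ Ioo (0:ℝ) 1, 0 < f x) →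
      (∀ ε ∈ Ioo (0:ℝ) (1/2), ∀ s ∈ Icc ε (1 - ε), c * ε ≤ f s) →
      ∀ H : ℝ, 0 < H → ∀ T T' : ℝ → ℝ,
        (∀ y, HasDerivAt T (T' y) y) → Continuous T' →
        (∀ y, T y ∈ Icc (0:ℝ) 1) →
        ∀ y₁ ∈ Icc (0:ℝ) H, ∀ y₂ ∈ Icc (0:ℝ) H,
          C * |T y₁ - T y₂| ^ 3
            ≤ (∫ y in (0:ℝ)..H, (T' y) ^ 2) * (∫ y in (0:ℝ)..H, f (T y)) := by
  refine ⟨c / 27, by positivity, ?_⟩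
  intro f hf hf0 hf1 hfpos hflow H hH T T' hT hT' hTmem y₁ hy₁ y₂ hy₂
  rcases le_total (T y₁) (T y₂) with h | h
  · exact osc_aux c hc f hf hf0 hf1 hfpos hflow H hH T T' hT hT' hTmem y₁ hy₁ y₂ hy₂ h
  · rw [abs_sub_comm]
    exact osc_aux c hc f hf hf0 hf1 hfpos hflow H hH T T' hT hT' hTmem y₂ hy₂ y₁ hy₁ h
end
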